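/- Let ([P*],[u*]) be an optimal process for the free-payments control problem with η∈[0,1) and γ>0. Then the absolute debt priority rule holds: for every node i∈{1,…,n} and every period t∈{0,…,T−1}, p*_i(t) = min( p̄*_i(t), w*_i(t) + c*_i(t) + Σ_{j≠i} P*_{ji}(t) ), where p*(t)=P*(t)1, p̄*(t)=P̄*(t)1, and w*, c*, P̄* are the net worths, total inflows, and residual liabilities generated by the optimal process. -/
import Mathlib

set_option linter.unusedSectionVars false

open Finset

noncomputable section

/-- Residual liability matrices: `P̄(0) = P̄`, `P̄(t+1) = α (P̄(t) - P(t))`. -/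
def resLiab {n : ℕ} (α : ℝ) (Pbar : Matrix (Fin n) (Fin n) ℝ)
    (P : ℕ → Matrix (Fin n) (Fin n) ℝ) : ℕ → Matrix (Fin n) (Fin n) ℝ
  | 0 => Pbar
  | t + 1 => fun i j => α * (resLiab α Pbar P t i j - P t i j)

/-- Net worths: `w(0) = 0`, `w(t+1) = w(t) + c(t) + P(t)ᵀ1 - P(t)1`. -/
def netWorth {n : ℕ} (c : ℕ → Fin n → ℝ)
    (P : ℕ → Matrix (Fin n) (Fin n) ℝ) : ℕ → Fin n → ℝ
  | 0 => fun _ => 0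
  | t + 1 => fun i => netWorth c P t i + c t i + (∑ j, P t j i) - (∑ j, P t i j)

/-- Cumulative injected cash `B(t) = Σ_{k=0}^{t} 1ᵀ u(k)`. -/
def budget {n : ℕ} (u : ℕ → Fin n → ℝ) (t : ℕ) : ℝ :=
  ∑ k ∈ range (t + 1), ∑ i, u k i

/-- Feasibility of a process `([P],[u])` for the free-payments control problem. -/
def FeasibleFree {n : ℕ} (T : ℕ) (α : ℝ) (Pbar : Matrix (Fin n) (Fin n) ℝ)
    (e : ℕ → Fin n → ℝ) (F : ℕ → ℝ)
    (P : ℕ → Matrix (Fin n) (Fin n) ℝ) (u : ℕ → Fin n → ℝ) : Prop :=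
  ∀ t, t < T →
    (∀ i j, 0 ≤ P t i j) ∧ (∀ i, 0 ≤ u t i) ∧
    (∀ i j, P t i j ≤ resLiab α Pbar P t i j) ∧
    (∀ i, 0 ≤ netWorth (fun s i => e s i + u s i) P (t + 1) i) ∧
    budget u t ≤ F t

/-- Cost `J([P],[u])` of the free-payments control problem. -/
def costFree {n : ℕ} (T : ℕ) (α η γ : ℝ) (Pbar : Matrix (Fin n) (Fin n) ℝ)
    (P : ℕ → Matrix (Fin n) (Fin n) ℝ) (u : ℕ → Fin n → ℝ) : ℝ :=
  (1 - η) * ∑ t ∈ range T, ∑ i, ∑ j, (resLiab α Pbar P t i j - P t i j)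
    + η * ∑ i, ∑ j, resLiab α Pbar P T i j
    + γ * budget u (T - 1)

/-- Optimality for the free-payments control problem. -/
def OptimalFree {n : ℕ} (T : ℕ) (α η γ : ℝ) (Pbar : Matrix (Fin n) (Fin n) ℝ)
    (e : ℕ → Fin n → ℝ) (F : ℕ → ℝ)
    (P : ℕ → Matrix (Fin n) (Fin n) ℝ) (u : ℕ → Fin n → ℝ) : Prop :=
  FeasibleFree T α Pbar e F P u ∧
  ∀ P' u', FeasibleFree T α Pbar e F P' u' →
    costFree T α η γ Pbar P u ≤ costFree T α η γ Pbar P' u'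

def Acoef (α : ℝ) (g : ℕ → ℝ) : ℕ → ℝ
  | 0 => 0
  | s + 1 => α * (Acoef α g s + g s)

def Bcoef (g : ℕ → ℝ) : ℕ → ℝ
  | 0 => 0
  | s + 1 => Bcoef g s + g s

lemma resLiab_perturb {n : ℕ} (α : ℝ) (Pbar : Matrix (Fin n) (Fin n) ℝ)
    (P : ℕ → Matrix (Fin n) (Fin n) ℝ) (M : Matrix (Fin n) (Fin n) ℝ) (g : ℕ → ℝ) :
    ∀ (s : ℕ) (a b : Fin n),
      resLiab α Pbar (fun r => fun i j => P r i j + g r * M i j) s a b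
        = resLiab α Pbar P s a b - Acoef α g s * M a b := by
  intro s
  induction s with
  | zero => intro a b; simp [resLiab, Acoef]
  | succ s ih =>
    intro a b
    simp only [resLiab, Acoef, ih]
    ring

lemma netWorth_perturb {n : ℕ} (c : ℕ → Fin n → ℝ)
    (P : ℕ → Matrix (Fin n) (Fin n) ℝ) (M : Matrix (Fin n) (Fin n) ℝ) (g : ℕ → ℝ) :
    ∀ (s : ℕ) (v : Fin n),
      netWorth c (fun r => fun i j => P r i j + g r * M i j) s v
        = netWorth c P s v + Bcoef g s * ((∑ j, M j v) - (∑ j, M v j)) := by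
  intro s
  induction s with
  | zero => intro v; simp [netWorth, Bcoef]
  | succ s ih =>
    intro v
    simp only [netWorth, Bcoef, ih, Finset.sum_add_distrib, ← Finset.mul_sum]
    ring

lemma costFree_perturb {n : ℕ} (T : ℕ) (α η γ : ℝ) (Pbar : Matrix (Fin n) (Fin n) ℝ)
    (P : ℕ → Matrix (Fin n) (Fin n) ℝ) (u : ℕ → Fin n → ℝ)
    (M : Matrix (Fin n) (Fin n) ℝ) (g : ℕ → ℝ) :
    costFree T α η γ Pbar (fun r => fun i j => P r i j + g r * M i j) u
      = costFree T α η γ Pbar P u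
        - ((1 - η) * (∑ s ∈ range T, (Acoef α g s + g s)) + η * Acoef α g T)
            * (∑ a, ∑ b, M a b) := by
  have key : ∀ s, (∑ a, ∑ b : Fin n,
      (resLiab α Pbar (fun r => fun i j => P r i j + g r * M i j) s a b
        - (P s a b + g s * M a b)))
      = (∑ a, ∑ b, (resLiab α Pbar P s a b - P s a b))
        - (Acoef α g s + g s) * (∑ a, ∑ b, M a b) := by
    intro s
    rw [Finset.mul_sum, ← Finset.sum_sub_distrib]
    refine Finset.sum_congr rfl (fun a _ => ?_)
    rw [Finset.mul_sum, ← Finset.sum_sub_distrib]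
    refine Finset.sum_congr rfl (fun b _ => ?_)
    rw [resLiab_perturb]
    ring
  have keyT : (∑ a, ∑ b : Fin n,
      resLiab α Pbar (fun r => fun i j => P r i j + g r * M i j) T a b)
      = (∑ a, ∑ b, resLiab α Pbar P T a b) - Acoef α g T * (∑ a, ∑ b, M a b) := by
    rw [Finset.mul_sum, ← Finset.sum_sub_distrib]
    refine Finset.sum_congr rfl (fun a _ => ?_)
    rw [Finset.mul_sum, ← Finset.sum_sub_distrib]
    refine Finset.sum_congr rfl (fun b _ => ?_)
    rw [resLiab_perturb]
  simp only [costFree, keyT]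
  have : (∑ t ∈ range T, ∑ i, ∑ j,
      (resLiab α Pbar (fun r => fun i j => P r i j + g r * M i j) t i j
        - (P t i j + g t * M i j)))
      = (∑ t ∈ range T, ∑ i, ∑ j, (resLiab α Pbar P t i j - P t i j))
        - (∑ s ∈ range T, (Acoef α g s + g s)) * (∑ a, ∑ b, M a b) := by
    rw [Finset.sum_mul, ← Finset.sum_sub_distrib]
    exact Finset.sum_congr rfl (fun s _ => key s)
  rw [this]
  ring

def pulseg (α δ : ℝ) (t σ : ℕ) : ℕ → ℝ :=
  fun s => if s = t then δ else if s = σ then -(α ^ (σ - t) * δ) else 0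

section Pulse
variable {α δ : ℝ} {t σ : ℕ}

lemma Acoef_pulse_le (htσ : t < σ) : ∀ s, s ≤ t → Acoef α (pulseg α δ t σ) s = 0 := by
  intro s
  induction s with
  | zero => intro _; simp [Acoef]
  | succ s ih =>
    intro hs
    have h1 : s ≤ t := Nat.le_of_succ_le hs
    have h2 : s ≠ t := by omega
    have h3 : s ≠ σ := by omega
    simp [Acoef, ih h1, pulseg, h2, h3]

lemma Acoef_pulse_mid (htσ : t < σ) :
    ∀ s, t < s → s ≤ σ → Acoef α (pulseg α δ t σ) s = α ^ (s - t) * δ := by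
  intro s
  induction s with
  | zero => omega
  | succ s ih =>
    intro h1 h2
    rcases Nat.lt_or_ge t s with h | h
    · have hs : s ≠ t := by omega
      have hs2 : s ≠ σ := by omega
      rw [Acoef, ih h (by omega)]
      simp only [pulseg, if_neg hs, if_neg hs2]
      have : s + 1 - t = (s - t) + 1 := by omega
      rw [this, pow_succ]
      ring
    · have hst : s = t := by omega
      subst hst
      rw [Acoef, Acoef_pulse_le htσ s le_rfl]
      have : s + 1 - s = 1 := by omega
      rw [this, pow_one]
      simp [pulseg]

lemma Acoef_pulse_post (htσ : t < σ) :
    ∀ s, σ < s → Acoef α (pulseg α δ t σ) s = 0 := by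
  intro s
  induction s with
  | zero => omega
  | succ s ih =>
    intro h1
    rcases Nat.lt_or_ge σ s with h | h
    · have hs : s ≠ t := by omega
      have hs2 : s ≠ σ := by omega
      rw [Acoef, ih h]
      simp [pulseg, hs, hs2]
    · have hss : s = σ := by omega
      subst hss
      rw [Acoef, Acoef_pulse_mid htσ s htσ le_rfl]
      have hs : s ≠ t := by omega
      simp [pulseg, hs]

lemma Bcoef_pulse_le (htσ : t < σ) : ∀ s, s ≤ t → Bcoef (pulseg α δ t σ) s = 0 := by
  intro s
  induction s with
  | zero => intro _; simp [Bcoef]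
  | succ s ih =>
    intro hs
    have h2 : s ≠ t := by omega
    have h3 : s ≠ σ := by omega
    simp [Bcoef, ih (by omega), pulseg, h2, h3]

lemma Bcoef_pulse_mid (htσ : t < σ) :
    ∀ s, t < s → s ≤ σ → Bcoef (pulseg α δ t σ) s = δ := by
  intro s
  induction s with
  | zero => omega
  | succ s ih =>
    intro h1 h2
    rcases Nat.lt_or_ge t s with h | h
    · have hs : s ≠ t := by omega
      have hs2 : s ≠ σ := by omega
      rw [Bcoef, ih h (by omega)]
      simp [pulseg, hs, hs2]
    · have hst : s = t := by omega
      subst hst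
      rw [Bcoef, Bcoef_pulse_le htσ s le_rfl]
      simp [pulseg]

lemma Bcoef_pulse_post (htσ : t < σ) :
    ∀ s, σ < s → Bcoef (pulseg α δ t σ) s = δ - α ^ (σ - t) * δ := by
  intro s
  induction s with
  | zero => omega
  | succ s ih =>
    intro h1
    rcases Nat.lt_or_ge σ s with h | h
    · have hs : s ≠ t := by omega
      have hs2 : s ≠ σ := by omega
      rw [Bcoef, ih h]
      simp [pulseg, hs, hs2]
    · have hss : s = σ := by omega
      subst hss
      rw [Bcoef, Bcoef_pulse_mid htσ s htσ le_rfl]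
      have hs : s ≠ t := by omega
      simp [pulseg, hs]
      ring

end Pulse
section Facts
variable {n : ℕ} {T : ℕ} {α η γ : ℝ} {Pbar : Matrix (Fin n) (Fin n) ℝ}
  {e : ℕ → Fin n → ℝ} {F : ℕ → ℝ}
  {P : ℕ → Matrix (Fin n) (Fin n) ℝ} {u : ℕ → Fin n → ℝ}
  (hα : 1 ≤ α)
  (hPbar : ∀ i j, 0 ≤ Pbar i j) (hPdiag : ∀ i, Pbar i i = 0)
  (he : ∀ t, t < T → ∀ i, 0 ≤ e t i)
  (hfeas : FeasibleFree T α Pbar e F P u)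

local notation "D" => resLiab α Pbar P
local notation "w" => netWorth (fun s i => e s i + u s i) P

include hfeas

lemma P_nonneg {s : ℕ} (hs : s < T) : ∀ a b, 0 ≤ P s a b := (hfeas s hs).1

lemma P_le_D {s : ℕ} (hs : s < T) : ∀ a b, P s a b ≤ D s a b := (hfeas s hs).2.2.1

include hα hPbar in
lemma D_nonneg : ∀ s, s ≤ T → ∀ a b, 0 ≤ D s a b := by
  intro s
  induction s with
  | zero => intro _ a b; exact hPbar a b
  | succ s ih =>
    intro hs a b
    have h1 : P s a b ≤ D s a b := P_le_D hfeas (by omega) a b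
    have : (0:ℝ) ≤ D s a b - P s a b := by linarith
    show 0 ≤ α * (D s a b - P s a b)
    positivity

include hα hPbar hPdiag in
lemma D_diag : ∀ s, s ≤ T → ∀ a, D s a a = 0 := by
  intro s
  induction s with
  | zero => intro _ a; exact hPdiag a
  | succ s ih =>
    intro hs a
    have h0 := ih (by omega) a
    have h1 : P s a a ≤ D s a a := P_le_D hfeas (by omega) a a
    have h2 : 0 ≤ P s a a := P_nonneg hfeas (by omega) a a
    show α * (D s a a - P s a a) = 0
    have : P s a a = 0 := le_antisymm (h0 ▸ h1) h2
    rw [this, h0]; ring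

include hα hPbar hPdiag in
lemma P_diag : ∀ s, s < T → ∀ a, P s a a = 0 := by
  intro s hs a
  have h0 := D_diag hα hPbar hPdiag hfeas s (by omega) a
  have h1 : P s a a ≤ D s a a := P_le_D hfeas hs a a
  have h2 : 0 ≤ P s a a := P_nonneg hfeas hs a a
  exact le_antisymm (h0 ▸ h1) h2

lemma w_nonneg : ∀ s, s ≤ T → ∀ v, 0 ≤ w s v := by
  intro s hs v
  cases s with
  | zero => simp [netWorth]
  | succ s => exact (hfeas s (by omega)).2.2.2.1 v

include he in
lemma w_mono : ∀ (v : Fin n) (s1 s2 : ℕ), s1 ≤ s2 → s2 ≤ T →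
    (∀ r, s1 ≤ r → r < s2 → ∀ j, P r v j = 0) → w s1 v ≤ w s2 v := by
  intro v s1 s2 h12 h2T hz
  induction s2 with
  | zero =>
    have : s1 = 0 := by omega
    subst this; exact le_rfl
  | succ s2 ih =>
    rcases Nat.lt_or_ge s1 (s2+1) with h | h
    · have hs1 : s1 ≤ s2 := by omega
      have step : w s2 v ≤ w (s2+1) v := by
        show w s2 v ≤ w s2 v + (e s2 v + u s2 v) + (∑ j, P s2 j v) - (∑ j, P s2 v j)
        have hout : (∑ j, P s2 v j) = 0 := by
          apply Finset.sum_eq_zero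
          intro j _
          exact hz s2 hs1 (by omega) j
        have hin : 0 ≤ (∑ j, P s2 j v) :=
          Finset.sum_nonneg (fun j _ => P_nonneg hfeas (by omega) j v)
        have hc : 0 ≤ e s2 v + u s2 v :=
          add_nonneg (he s2 (by omega) v) ((hfeas s2 (by omega)).2.1 v)
        linarith
      exact le_trans (ih hs1 (by omega) (fun r hr1 hr2 j => hz r hr1 (by omega) j)) step
    · have : s1 = s2 + 1 := by omega
      subst this; exact le_rfl

include hα in
lemma slack_bound : ∀ (a b : Fin n) (σ : ℕ), σ < T →
    ∀ s, s < σ → P σ a b ≤ α ^ (σ - s) * (D s a b - P s a b) := by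
  intro a b σ hσ
  have key : ∀ k, ∀ s, s + k + 1 = σ → P σ a b ≤ α ^ k * D (s+1) a b := by
    intro k
    induction k with
    | zero =>
      intro s hs
      have : s + 1 = σ := by omega
      rw [this]
      simpa using P_le_D hfeas hσ a b
    | succ k ih =>
      intro s hs
      have h1 : P σ a b ≤ α ^ k * D (s+2) a b := ih (s+1) (by omega)
      have h2 : D (s+2) a b ≤ α * D (s+1) a b := by
        show α * (D (s+1) a b - P (s+1) a b) ≤ α * D (s+1) a b
        have : 0 ≤ P (s+1) a b := P_nonneg hfeas (by omega) a b
        nlinarith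
      calc P σ a b ≤ α ^ k * D (s+2) a b := h1
        _ ≤ α ^ k * (α * D (s+1) a b) := by
            apply mul_le_mul_of_nonneg_left h2 (by positivity)
        _ = α ^ (k+1) * D (s+1) a b := by rw [pow_succ]; ring
  intro s hsσ
  have h := key (σ - s - 1) s (by omega)
  have hD : D (s+1) a b = α * (D s a b - P s a b) := rfl
  rw [hD] at h
  set k := σ - s - 1 with hk
  have hexp : σ - s = k + 1 := by omega
  have : α ^ k * (α * (D s a b - P s a b)) = α ^ (σ - s) * (D s a b - P s a b) := by
    rw [hexp, pow_succ]; ring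
  linarith [h, this.symm.le]

variable (hη0 : 0 ≤ η) (hη1 : η < 1) {δ : ℝ}
variable (hopt : OptimalFree T α η γ Pbar e F P u)

include hα hη0 hη1 hopt in
lemma improve_contra (t σ : ℕ) (ht : t < T) (htσ : t < σ) (hσT : σ ≤ T)
    (M : Matrix (Fin n) (Fin n) ℝ) (hδ : 0 < δ)
    (hM0 : ∀ a b, 0 ≤ M a b) (hMpos : 0 < ∑ a, ∑ b, M a b)
    (H1 : σ < T → ∀ a b, α ^ (σ - t) * δ * M a b ≤ P σ a b)
    (H2 : ∀ s, t ≤ s → s < σ → s < T → ∀ a b,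
      α ^ (s - t) * δ * M a b ≤ resLiab α Pbar P s a b - P s a b)
    (H3 : ∀ (v : Fin n) (s : ℕ), t < s → s ≤ T →
      0 ≤ netWorth (fun r i => e r i + u r i) P s v
          + Bcoef (pulseg α δ t σ) s * ((∑ j, M j v) - (∑ j, M v j))) :
    False := by
  classical
  set g := pulseg α δ t σ with hg
  set Q : ℕ → Matrix (Fin n) (Fin n) ℝ := fun r => fun i j => P r i j + g r * M i j with hQ
  have hfeas := hopt.1
  -- feasibility of Q
  have hfeasQ : FeasibleFree T α Pbar e F Q u := by
    intro t' ht'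
    refine ⟨?_, (hfeas t' ht').2.1, ?_, ?_, (hfeas t' ht').2.2.2.2⟩
    · -- nonneg
      intro a b
      show 0 ≤ P t' a b + g t' * M a b
      have hP0 := P_nonneg hfeas ht' a b
      by_cases h1 : t' = t
      · subst h1
        have : g t' = δ := by simp [hg, pulseg]
        rw [this]
        have := hM0 a b
        nlinarith
      · by_cases h2 : t' = σ
        · subst h2
          have : g t' = -(α ^ (t' - t) * δ) := by simp [hg, pulseg, h1]
          rw [this]
          have := H1 ht' a b
          linarith
        · have : g t' = 0 := by simp [hg, pulseg, h1, h2]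
          rw [this]; linarith
    · -- ≤ residual
      intro a b
      rw [hQ]
      show P t' a b + g t' * M a b ≤ resLiab α Pbar Q t' a b
      have hres : resLiab α Pbar Q t' a b
          = resLiab α Pbar P t' a b - Acoef α g t' * M a b := resLiab_perturb α Pbar P M g t' a b
      rw [hres]
      have hPD := P_le_D hfeas ht' a b
      rcases Nat.lt_or_ge t' t with h | h
      · have hA : Acoef α g t' = 0 := Acoef_pulse_le htσ t' (by omega)
        have hgz : g t' = 0 := by
          simp [hg, pulseg, show t' ≠ t by omega, show t' ≠ σ by omega]
        rw [hA, hgz]; linarith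
      · rcases Nat.eq_or_lt_of_le h with h1 | h1
        · -- t' = t
          have ht'' : t' = t := h1.symm
          subst ht''
          have hA : Acoef α g t' = 0 := Acoef_pulse_le htσ t' le_rfl
          have hgz : g t' = δ := by simp [hg, pulseg]
          rw [hA, hgz]
          have := H2 t' le_rfl htσ ht' a b
          simp only [Nat.sub_self, pow_zero, one_mul] at this
          linarith
        · rcases Nat.lt_or_ge t' σ with h2 | h2
          · -- t < t' < σ
            have hA : Acoef α g t' = α ^ (t' - t) * δ :=
              Acoef_pulse_mid htσ t' h1 (by omega)
            have hgz : g t' = 0 := by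
              simp [hg, pulseg, show t' ≠ t by omega, show t' ≠ σ by omega]
            rw [hA, hgz]
            have := H2 t' (by omega) h2 ht' a b
            linarith
          · rcases Nat.eq_or_lt_of_le h2 with h3 | h3
            · -- t' = σ
              have ht'' : t' = σ := h3.symm
              subst ht''
              have hA : Acoef α g t' = α ^ (t' - t) * δ :=
                Acoef_pulse_mid htσ t' htσ le_rfl
              have hgz : g t' = -(α ^ (t' - t) * δ) := by
                simp [hg, pulseg, show t' ≠ t by omega]
              rw [hA, hgz]
              linarith
            · -- t' > σ
              have hA : Acoef α g t' = 0 := Acoef_pulse_post htσ t' h3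
              have hgz : g t' = 0 := by
                simp [hg, pulseg, show t' ≠ t by omega, show t' ≠ σ by omega]
              rw [hA, hgz]; linarith
    · -- net worth
      intro v
      have hnw : netWorth (fun s i => e s i + u s i) Q (t'+1) v
          = netWorth (fun s i => e s i + u s i) P (t'+1) v
            + Bcoef g (t'+1) * ((∑ j, M j v) - (∑ j, M v j)) :=
        netWorth_perturb (fun s i => e s i + u s i) P M g (t'+1) v
      rw [hnw]
      rcases Nat.lt_or_ge t' t with h | h
      · have hB : Bcoef g (t'+1) = 0 := Bcoef_pulse_le htσ (t'+1) (by omega)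
        rw [hB]
        have := w_nonneg hfeas (t'+1) (by omega) v
        linarith
      · exact H3 v (t'+1) (by omega) (by omega)
  -- cost comparison
  have hcost : costFree T α η γ Pbar Q u
      = costFree T α η γ Pbar P u
        - ((1 - η) * (∑ s ∈ range T, (Acoef α g s + g s)) + η * Acoef α g T)
            * (∑ a, ∑ b, M a b) := costFree_perturb T α η γ Pbar P u M g
  have hterm : ∀ s ∈ range T, 0 ≤ Acoef α g s + g s := by
    intro s _
    rcases Nat.lt_or_ge s t with h | h
    · rw [Acoef_pulse_le htσ s (by omega)]
      have : g s = 0 := by simp [hg, pulseg, show s ≠ t by omega, show s ≠ σ by omega]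
      rw [this]; norm_num
    · rcases Nat.eq_or_lt_of_le h with h1 | h1
      · have hs : s = t := h1.symm
        subst hs
        rw [Acoef_pulse_le htσ s le_rfl]
        have : g s = δ := by simp [hg, pulseg]
        rw [this]; linarith
      · rcases Nat.lt_or_ge s σ with h2 | h2
        · rw [Acoef_pulse_mid htσ s h1 (by omega)]
          have : g s = 0 := by simp [hg, pulseg, show s ≠ t by omega, show s ≠ σ by omega]
          rw [this]
          have : (0:ℝ) ≤ α ^ (s-t) * δ := by positivity
          linarith
        · rcases Nat.eq_or_lt_of_le h2 with h3 | h3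
          · have hs : s = σ := h3.symm
            subst hs
            rw [Acoef_pulse_mid htσ s htσ le_rfl]
            have : g s = -(α ^ (s - t) * δ) := by simp [hg, pulseg, show s ≠ t by omega]
            rw [this]; ring_nf; norm_num
          · rw [Acoef_pulse_post htσ s h3]
            have : g s = 0 := by simp [hg, pulseg, show s ≠ t by omega, show s ≠ σ by omega]
            rw [this]; norm_num
  have htsum : δ ≤ ∑ s ∈ range T, (Acoef α g s + g s) := by
    have h1 : Acoef α g t + g t = δ := by
      rw [Acoef_pulse_le htσ t le_rfl]
      have : g t = δ := by simp [hg, pulseg]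
      rw [this]; ring
    calc δ = Acoef α g t + g t := h1.symm
      _ ≤ ∑ s ∈ range T, (Acoef α g s + g s) :=
          Finset.single_le_sum hterm (by simpa using ht)
  have hAT : 0 ≤ Acoef α g T := by
    rcases Nat.eq_or_lt_of_le hσT with h | h
    · rw [← h, Acoef_pulse_mid htσ σ htσ le_rfl]
      positivity
    · rw [Acoef_pulse_post htσ T h]
  have hX : (1 - η) * δ ≤ (1 - η) * (∑ s ∈ range T, (Acoef α g s + g s)) + η * Acoef α g T := by
    have h1 : (1 - η) * δ ≤ (1 - η) * (∑ s ∈ range T, (Acoef α g s + g s)) := by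
      apply mul_le_mul_of_nonneg_left htsum (by linarith)
    nlinarith
  have hXpos : 0 < ((1 - η) * (∑ s ∈ range T, (Acoef α g s + g s)) + η * Acoef α g T)
      * (∑ a, ∑ b, M a b) := by
    have : 0 < (1 - η) * δ := by nlinarith
    nlinarith
  have := hopt.2 Q u hfeasQ
  rw [hcost] at this
  linarith

omit hopt

/-- The absolute-priority statement at a given time and node. -/
def APat (T' : ℕ) (α' η' γ' : ℝ) (Pbar' : Matrix (Fin n) (Fin n) ℝ)
    (e' : ℕ → Fin n → ℝ) (P' : ℕ → Matrix (Fin n) (Fin n) ℝ) (u' : ℕ → Fin n → ℝ)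
    (t : ℕ) (i : Fin n) : Prop :=
  ∑ j, P' t i j =
    min (∑ j, resLiab α' Pbar' P' t i j)
      (netWorth (fun s i => e' s i + u' s i) P' t i + (e' t i + u' t i)
        + ∑ j ∈ univ.erase i, P' t j i)

include hα hPbar hPdiag in
lemma wealth_identity {s : ℕ} (hs : s < T) (v : Fin n) :
    netWorth (fun r i => e r i + u r i) P (s+1) v
      = netWorth (fun r i => e r i + u r i) P s v + (e s v + u s v)
        + (∑ j ∈ univ.erase v, P s j v) - ∑ j, P s v j := by
  have hdiag := P_diag hα hPbar hPdiag hfeas s hs v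
  have hsum : (∑ j, P s j v) = (∑ j ∈ univ.erase v, P s j v) + P s v v := by
    rw [add_comm]
    exact (Finset.add_sum_erase univ (fun j => P s j v) (Finset.mem_univ v)).symm
  show netWorth (fun r i => e r i + u r i) P s v + (e s v + u s v)
        + (∑ j, P s j v) - (∑ j, P s v j) = _
  rw [hsum, hdiag]
  ring

include hα hPbar hPdiag he in
lemma absorber (σ : ℕ) (hσ : σ < T) (z : Fin n)
    (hAP : APat T α η γ Pbar e P u σ z)
    (hw : 0 < netWorth (fun r i => e r i + u r i) P (σ+1) z) :
    ∀ s, σ < s → s ≤ T →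
      netWorth (fun r i => e r i + u r i) P (σ+1) z
        ≤ netWorth (fun r i => e r i + u r i) P s z := by
  -- first: payments equal residuals at σ
  have hid := wealth_identity hα hPbar hPdiag hfeas hσ z
  have hple : ∑ j, P σ z j ≤ ∑ j, resLiab α Pbar P σ z j :=
    Finset.sum_le_sum (fun j _ => P_le_D hfeas hσ z j)
  have hpay : ∑ j, P σ z j = ∑ j, resLiab α Pbar P σ z j := by
    unfold APat at hAP
    rcases le_or_gt (∑ j, resLiab α Pbar P σ z j)
      (netWorth (fun s i => e s i + u s i) P σ z + (e σ z + u σ z)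
        + ∑ j ∈ univ.erase z, P σ j z) with h | h
    · rw [hAP, min_eq_left h]
    · exfalso
      rw [min_eq_right h.le] at hAP
      -- then w(σ+1) = 0
      have : netWorth (fun r i => e r i + u r i) P (σ+1) z = 0 := by
        rw [hid, ← hAP]; ring
      linarith
  have hentry : ∀ j, P σ z j = resLiab α Pbar P σ z j := by
    intro j
    have := (Finset.sum_eq_sum_iff_of_le
      (fun j (_ : j ∈ (univ : Finset (Fin n))) => P_le_D hfeas hσ z j)).1 hpay
    exact this j (Finset.mem_univ j)
  -- residuals of z vanish after σ, payments vanish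
  have hDzero : ∀ s, σ < s → s ≤ T → ∀ j, resLiab α Pbar P s z j = 0 := by
    intro s
    induction s with
    | zero => omega
    | succ s ih =>
      intro h1 h2 j
      rcases Nat.lt_or_ge σ s with h | h
      · have hD := ih h (by omega) j
        have hP : P s z j = 0 := by
          have h0 := P_nonneg hfeas (show s < T by omega) z j
          have h1' := P_le_D hfeas (show s < T by omega) z j
          rw [hD] at h1'
          linarith
        show α * (resLiab α Pbar P s z j - P s z j) = 0
        rw [hD, hP]; ring
      · have hss : s = σ := by omega
        subst hss
        show α * (resLiab α Pbar P s z j - P s z j) = 0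
        rw [hentry j]; ring
  have hPzero : ∀ s, σ < s → s < T → ∀ j, P s z j = 0 := by
    intro s h1 h2 j
    have h0 := P_nonneg hfeas h2 z j
    have h1' := P_le_D hfeas h2 z j
    rw [hDzero s h1 (by omega) j] at h1'
    linarith
  intro s h1 h2
  exact w_mono he hfeas z (σ+1) s (by omega) h2 (fun r hr1 hr2 j => hPzero r (by omega) (by omega) j)

include hα in
lemma entry_growth (t : ℕ) (i j : Fin n)
    (hz : ∀ r, t < r → r < T → P r i j = 0) :
    ∀ s, t < s → s ≤ T →
      resLiab α Pbar P s i j = α ^ (s - t) * (resLiab α Pbar P t i j - P t i j) := by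
  intro s
  induction s with
  | zero => omega
  | succ s ih =>
    intro h1 h2
    rcases Nat.lt_or_ge t s with h | h
    · have hih := ih h (by omega)
      show α * (resLiab α Pbar P s i j - P s i j) = _
      rw [hih, hz s h (by omega)]
      have hexp : s + 1 - t = (s - t) + 1 := by omega
      rw [hexp, pow_succ]
      ring
    · have hst : s = t := by omega
      subst hst
      show α * (resLiab α Pbar P s i j - P s i j) = _
      have hexp : s + 1 - s = 1 := by omega
      rw [hexp, pow_one]

/-- One-entry matrix. -/
def single (a b : Fin n) : Matrix (Fin n) (Fin n) ℝ :=
  fun x y => if x = a ∧ y = b then 1 else 0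

omit hfeas in
lemma single_nonneg (a b x y : Fin n) : 0 ≤ single a b x y := by
  unfold single; split <;> norm_num

omit hfeas in
lemma single_rowcol (a b : Fin n) (hab : a ≠ b) (v : Fin n) :
    (∑ j, single a b j v) - (∑ j, single a b v j)
      = (if v = b then 1 else 0) - (if v = a then 1 else 0) := by
  have hcol : (∑ j, single a b j v) = if v = b then 1 else 0 := by
    by_cases h : v = b
    · subst h
      rw [if_pos rfl]
      rw [Finset.sum_eq_single a]
      · simp [single]
      · intro x _ hx; simp [single, hx]
      · intro h; exact absurd (Finset.mem_univ a) h
    · rw [if_neg h]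
      apply Finset.sum_eq_zero
      intro x _
      simp [single, fun _ => Ne.symm h ∘ Eq.symm]
      intro _; exact fun hh => h hh
  have hrow : (∑ j, single a b v j) = if v = a then 1 else 0 := by
    by_cases h : v = a
    · subst h
      rw [if_pos rfl]
      rw [Finset.sum_eq_single b]
      · simp [single]
      · intro x _ hx; simp [single, hx]
      · intro h; exact absurd (Finset.mem_univ b) h
    · rw [if_neg h]
      apply Finset.sum_eq_zero
      intro x _
      simp [single]
      intro hh; exact absurd hh (Ne.symm (fun q => h q.symm))
  rw [hcol, hrow]

section Walk
variable (σ : ℕ) (i : Fin n)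

/-- The step relation: from a broke node (≠ i) along a positive payment at `σ`. -/
def StepRel (a b : Fin n) : Prop :=
  netWorth (fun r i => e r i + u r i) P (σ+1) a = 0 ∧ a ≠ i ∧ 0 < P σ a b

include hα hPbar hPdiag in
lemma walk_matrix (hσ : σ < T) (k1 z : Fin n)
    (hreach : Relation.ReflTransGen (StepRel (e := e) (P := P) (u := u) σ i) k1 z) :
    ∃ M : Matrix (Fin n) (Fin n) ℝ,
      (∀ a b, 0 ≤ M a b) ∧
      (∀ a b, M a b ≠ 0 → 0 < P σ a b ∧ a ≠ i) ∧
      (∀ v, (∑ j, M j v) - (∑ j, M v j)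
        = (if v = z then 1 else 0) - (if v = k1 then 1 else 0)) := by
  induction hreach with
  | refl =>
    refine ⟨0, by simp [Matrix.zero_apply], by simp [Matrix.zero_apply], ?_⟩
    intro v; simp
  | @tail b c hab hbc ih =>
    obtain ⟨M, hM0, hMsupp, hMflow⟩ := ih
    have hbc' : b ≠ c := by
      intro h
      subst h
      have := hbc.2.2
      have hdiag := P_diag hα hPbar hPdiag hfeas σ hσ b
      rw [hdiag] at this
      exact lt_irrefl 0 this
    refine ⟨fun x y => M x y + single b c x y, ?_, ?_, ?_⟩
    · intro a b'
      exact add_nonneg (hM0 a b') (single_nonneg b c a b')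
    · intro a b' h
      have h' : M a b' + single b c a b' ≠ 0 := h
      by_cases hM : M a b' ≠ 0
      · exact hMsupp a b' hM
      · push_neg at hM
        rw [hM, zero_add] at h'
        have : a = b ∧ b' = c := by
          by_contra hc
          simp [single, hc] at h'
        obtain ⟨h1, h2⟩ := this
        subst h1; subst h2
        exact ⟨hbc.2.2, hbc.2.1⟩
    · intro v
      have h1 : (∑ j, (M j v + single b c j v)) = (∑ j, M j v) + (∑ j, single b c j v) :=
        Finset.sum_add_distrib
      have h2 : (∑ j, (M v j + single b c v j)) = (∑ j, M v j) + (∑ j, single b c v j) :=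
        Finset.sum_add_distrib
      rw [h1, h2]
      have hs := single_rowcol b c hbc' v
      have hflow := hMflow v
      linarith

include hα hPbar hPdiag he in
lemma reach_good (hσ : σ < T) (k1 : Fin n) (hik1 : 0 < P σ i k1) :
    ∃ z, Relation.ReflTransGen (StepRel (e := e) (P := P) (u := u) σ i) k1 z ∧
      (z = i ∨ 0 < netWorth (fun r i => e r i + u r i) P (σ+1) z) := by
  classical
  by_contra hno
  push_neg at hno
  have hbroke : ∀ z, Relation.ReflTransGen (StepRel (e := e) (P := P) (u := u) σ i) k1 z →
      z ≠ i ∧ netWorth (fun r i => e r i + u r i) P (σ+1) z = 0 := by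
    intro z hz
    have h := hno z hz
    refine ⟨h.1, le_antisymm h.2 (w_nonneg hfeas (σ+1) (by omega) z)⟩
  set S : Finset (Fin n) :=
    Finset.univ.filter (fun v => Relation.ReflTransGen (StepRel (e := e) (P := P) (u := u) σ i) k1 v)
    with hS
  have hk1S : k1 ∈ S := by
    rw [hS]; exact Finset.mem_filter.2 ⟨Finset.mem_univ _, Relation.ReflTransGen.refl⟩
  have hiS : i ∉ S := by
    rw [hS]
    intro h
    have := (hbroke i (Finset.mem_filter.1 h).2).1
    exact this rfl
  have hreachS : ∀ v ∈ S, Relation.ReflTransGen (StepRel (e := e) (P := P) (u := u) σ i) k1 v :=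
    fun v hv => (Finset.mem_filter.1 hv).2
  have hclosed : ∀ v ∈ S, ∀ j, j ∉ S → P σ v j = 0 := by
    intro v hv j hj
    by_contra hne
    have hpos : 0 < P σ v j :=
      lt_of_le_of_ne (P_nonneg hfeas hσ v j) (Ne.symm hne)
    have hbv := hbroke v (hreachS v hv)
    have hstep : StepRel (e := e) (P := P) (u := u) σ i v j := ⟨hbv.2, hbv.1, hpos⟩
    have : j ∈ S := by
      rw [hS]
      exact Finset.mem_filter.2 ⟨Finset.mem_univ _,
        Relation.ReflTransGen.tail (hreachS v hv) hstep⟩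
    exact hj this
  -- sum of wealths over S
  have hsum0 : (∑ v ∈ S, netWorth (fun r i => e r i + u r i) P (σ+1) v) = 0 :=
    Finset.sum_eq_zero (fun v hv => (hbroke v (hreachS v hv)).2)
  have hexpand : (∑ v ∈ S, netWorth (fun r i => e r i + u r i) P (σ+1) v)
      = (∑ v ∈ S, (netWorth (fun r i => e r i + u r i) P σ v + (e σ v + u σ v)))
        + ((∑ v ∈ S, ∑ j, P σ j v) - (∑ v ∈ S, ∑ j, P σ v j)) := by
    rw [← Finset.sum_sub_distrib, ← Finset.sum_add_distrib]
    refine Finset.sum_congr rfl (fun v hv => ?_)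
    show netWorth (fun r i => e r i + u r i) P σ v + (e σ v + u σ v)
        + (∑ j, P σ j v) - (∑ j, P σ v j) = _
    ring
  have hout : (∑ v ∈ S, ∑ j, P σ v j) = ∑ v ∈ S, ∑ j ∈ S, P σ v j := by
    refine Finset.sum_congr rfl (fun v hv => ?_)
    rw [← Finset.sum_add_sum_compl S (fun j => P σ v j)]
    have : (∑ j ∈ Sᶜ, P σ v j) = 0 :=
      Finset.sum_eq_zero (fun j hj => hclosed v hv j (Finset.mem_compl.1 hj))
    rw [this, add_zero]
  have hin : (∑ v ∈ S, ∑ j, P σ j v)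
      = (∑ v ∈ S, ∑ j ∈ S, P σ j v) + (∑ v ∈ S, ∑ j ∈ Sᶜ, P σ j v) := by
    rw [← Finset.sum_add_distrib]
    refine Finset.sum_congr rfl (fun v hv => ?_)
    rw [← Finset.sum_add_sum_compl S (fun j => P σ j v)]
  have hcomm : (∑ v ∈ S, ∑ j ∈ S, P σ j v) = ∑ v ∈ S, ∑ j ∈ S, P σ v j :=
    Finset.sum_comm
  have hkey : 0 = (∑ v ∈ S, (netWorth (fun r i => e r i + u r i) P σ v + (e σ v + u σ v)))
      + (∑ v ∈ S, ∑ j ∈ Sᶜ, P σ j v) := by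
    rw [← hsum0, hexpand, hout, hin, hcomm]
    ring
  have hterm : P σ i k1 ≤ ∑ v ∈ S, ∑ j ∈ Sᶜ, P σ j v := by
    have h1 : P σ i k1 ≤ ∑ j ∈ Sᶜ, P σ j k1 := by
      apply Finset.single_le_sum (f := fun j => P σ j k1)
        (fun j _ => P_nonneg hfeas hσ j k1)
      exact Finset.mem_compl.2 hiS
    calc P σ i k1 ≤ ∑ j ∈ Sᶜ, P σ j k1 := h1
      _ ≤ ∑ v ∈ S, ∑ j ∈ Sᶜ, P σ j v := by
          apply Finset.single_le_sum (f := fun v => ∑ j ∈ Sᶜ, P σ j v)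
            (fun v _ => Finset.sum_nonneg (fun j _ => P_nonneg hfeas hσ j v)) hk1S
  have hwc : 0 ≤ ∑ v ∈ S, (netWorth (fun r i => e r i + u r i) P σ v + (e σ v + u σ v)) := by
    apply Finset.sum_nonneg
    intro v hv
    have h1 := w_nonneg hfeas σ (by omega) v
    have h2 := he σ hσ v
    have h3 := (hfeas σ hσ).2.1 v
    linarith
  linarith

end Walk

include hα hPbar hPdiag he hη0 hη1 hopt in
lemma caseA_contra (t : ℕ) (ht : t < T) (i j0 : Fin n)
    (hslack : 0 < resLiab α Pbar P t i j0 - P t i j0)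
    (hw1 : 0 < netWorth (fun r i => e r i + u r i) P (t+1) i)
    (hA : ∀ s, t < s → s < T → ∀ j, P s i j = 0) : False := by
  classical
  have hij0 : i ≠ j0 := by
    intro h
    subst h
    have h1 := D_diag hα hPbar hPdiag hfeas t (by omega) i
    have h2 := P_diag hα hPbar hPdiag hfeas t ht i
    rw [h1, h2] at hslack
    norm_num at hslack
  set δ : ℝ := min (netWorth (fun r i => e r i + u r i) P (t+1) i)
    (resLiab α Pbar P t i j0 - P t i j0) with hδdef
  have hδ : 0 < δ := lt_min hw1 hslack
  set M : Matrix (Fin n) (Fin n) ℝ := single i j0 with hM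
  have hflow : ∀ v, (∑ j, M j v) - (∑ j, M v j)
      = (if v = j0 then 1 else 0) - (if v = i then 1 else 0) :=
    single_rowcol i j0 hij0
  have hMii : M i j0 = 1 := by simp [hM, single]
  refine improve_contra hα hfeas hη0 hη1 hopt t T ht ht le_rfl M hδ
    (fun a b => single_nonneg i j0 a b) ?_ (fun h => absurd h (lt_irrefl T)) ?_ ?_
  · -- positivity of total
    have h1 : M i j0 ≤ ∑ b, M i b := by
      apply Finset.single_le_sum (f := fun b => M i b)
        (fun b _ => single_nonneg i j0 i b) (Finset.mem_univ j0)
    have h2 : (∑ b, M i b) ≤ ∑ a, ∑ b, M a b := by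
      apply Finset.single_le_sum (f := fun a => ∑ b, M a b)
        (fun a _ => Finset.sum_nonneg (fun b _ => single_nonneg i j0 a b))
        (Finset.mem_univ i)
    rw [hMii] at h1
    linarith
  · -- H2
    intro s hts hsT hsT' a b
    by_cases hab : M a b = 0
    · rw [hab]
      have h1 := P_le_D hfeas hsT' a b
      have : α ^ (s - t) * δ * 0 = 0 := by ring
      rw [this]
      linarith
    · have : a = i ∧ b = j0 := by
        by_contra hc
        simp [hM, single, hc] at hab
      obtain ⟨ha, hb⟩ := this
      subst ha; subst hb
      rw [hMii, mul_one]
      rcases Nat.eq_or_lt_of_le hts with h1 | h1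
      · subst h1
        simp only [Nat.sub_self, pow_zero, one_mul]
        exact min_le_right _ _
      · have hgrow := entry_growth hα hfeas t a b
          (fun r hr1 hr2 => hA r hr1 hr2 b) s h1 (by omega)
        have hPzero : P s a b = 0 := hA s h1 hsT b
        rw [hgrow, hPzero, sub_zero]
        have hδle : δ ≤ resLiab α Pbar P t a b - P t a b := min_le_right _ _
        have hpow : (0:ℝ) < α ^ (s - t) := by positivity
        nlinarith
  · -- H3
    intro v s hts hsT
    rw [hflow v]
    have hB : Bcoef (pulseg α δ t T) s = δ := Bcoef_pulse_mid ht s hts hsT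
    rw [hB]
    by_cases hvi : v = i
    · subst hvi
      have hmono : netWorth (fun r i => e r i + u r i) P (t+1) v
          ≤ netWorth (fun r i => e r i + u r i) P s v := by
        apply w_mono he hfeas v (t+1) s (by omega) hsT
        intro r hr1 hr2 j
        exact hA r (by omega) (by omega) j
      have hδle : δ ≤ netWorth (fun r i => e r i + u r i) P (t+1) v := min_le_left _ _
      have hvj0 : ¬ v = j0 := hij0
      rw [if_neg hvj0, if_pos rfl]
      nlinarith
    · have hw0 := w_nonneg hfeas s hsT v
      by_cases hvj : v = j0
      · rw [if_pos hvj, if_neg hvi]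
        nlinarith
      · rw [if_neg hvj, if_neg hvi]
        nlinarith

set_option maxHeartbeats 1000000 in
include hα hPbar hPdiag he hη0 hη1 hopt in
lemma caseB_contra (t σ : ℕ) (ht : t < T) (htσ : t < σ) (hσT : σ < T) (i : Fin n)
    (hw1 : 0 < netWorth (fun r i => e r i + u r i) P (t+1) i)
    (hmid : ∀ r, t < r → r < σ → ∀ j, P r i j = 0)
    (k1 : Fin n) (hk1 : 0 < P σ i k1)
    (hIH : ∀ v, APat T α η γ Pbar e P u σ v) : False := by
  classical
  have hik1 : i ≠ k1 := by
    intro h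
    subst h
    rw [P_diag hα hPbar hPdiag hfeas σ hσT i] at hk1
    norm_num at hk1
  obtain ⟨z, hreach, hgood⟩ := reach_good hα hPbar hPdiag he hfeas σ i hσT k1 hk1
  obtain ⟨M0, hM00, hM0supp, hM0flow⟩ :=
    walk_matrix hα hPbar hPdiag hfeas σ i hσT k1 z hreach
  set M : Matrix (Fin n) (Fin n) ℝ := fun x y => M0 x y + single i k1 x y with hM
  have hM0' : ∀ a b, 0 ≤ M a b := fun a b =>
    add_nonneg (hM00 a b) (single_nonneg i k1 a b)
  have hMsupp : ∀ a b, M a b ≠ 0 → 0 < P σ a b := by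
    intro a b h
    have h' : M0 a b + single i k1 a b ≠ 0 := h
    by_cases h0 : M0 a b = 0
    · rw [h0, zero_add] at h'
      have : a = i ∧ b = k1 := by
        by_contra hc
        simp [single, hc] at h'
      rw [this.1, this.2]
      exact hk1
    · exact (hM0supp a b h0).1
  have hMflow : ∀ v, (∑ j, M j v) - (∑ j, M v j)
      = (if v = z then 1 else 0) - (if v = i then 1 else 0) := by
    intro v
    have h1 : (∑ j, M j v) = (∑ j, M0 j v) + (∑ j, single i k1 j v) := by
      rw [← Finset.sum_add_distrib]
    have h2 : (∑ j, M v j) = (∑ j, M0 v j) + (∑ j, single i k1 v j) := by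
      rw [← Finset.sum_add_distrib]
    rw [h1, h2]
    have hs := single_rowcol i k1 hik1 v
    have hf := hM0flow v
    by_cases hvk : v = k1
    · subst hvk
      rw [if_neg (Ne.symm hik1)] at hs ⊢
      linarith
    · rw [if_neg hvk] at hs hf
      linarith
  have hMik1 : M i k1 = M0 i k1 + 1 := by
    simp [hM, single]
  have hM0ik1 : M0 i k1 = 0 := by
    by_contra h
    exact (hM0supp i k1 h).2 rfl
  -- total positivity
  have hMtot : 0 < ∑ a, ∑ b, M a b := by
    have h1 : M i k1 ≤ ∑ b, M i b :=
      Finset.single_le_sum (f := fun b => M i b) (fun b _ => hM0' i b) (Finset.mem_univ k1)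
    have h2 : (∑ b, M i b) ≤ ∑ a, ∑ b, M a b :=
      Finset.single_le_sum (f := fun a => ∑ b, M a b)
        (fun a _ => Finset.sum_nonneg (fun b _ => hM0' a b)) (Finset.mem_univ i)
    rw [hMik1, hM0ik1] at h1
    linarith
  -- choice of δ
  have hαpow : (0:ℝ) < α ^ (σ - t) := by positivity
  set Spt : Finset (Fin n × Fin n) :=
    (Finset.univ ×ˢ Finset.univ).filter (fun p => M p.1 p.2 ≠ 0) with hSpt
  have hSptne : Spt.Nonempty := by
    refine ⟨(i, k1), Finset.mem_filter.2 ⟨?_, ?_⟩⟩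
    · exact Finset.mem_product.2 ⟨Finset.mem_univ _, Finset.mem_univ _⟩
    · show M i k1 ≠ 0
      rw [hMik1, hM0ik1]; norm_num
  set δ2 : ℝ := Spt.inf' hSptne (fun p => P σ p.1 p.2 / (α ^ (σ - t) * M p.1 p.2)) with hδ2
  have hδ2pos : 0 < δ2 := by
    rw [hδ2, Finset.lt_inf'_iff]
    intro p hp
    have hne : M p.1 p.2 ≠ 0 := (Finset.mem_filter.1 hp).2
    have hMpos : 0 < M p.1 p.2 := lt_of_le_of_ne (hM0' p.1 p.2) (Ne.symm hne)
    exact div_pos (hMsupp p.1 p.2 hne) (by positivity)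
  set δ3 : ℝ := if z = i then (1:ℝ)
    else netWorth (fun r i => e r i + u r i) P (σ+1) z / α ^ (σ - t) with hδ3
  have hδ3pos : 0 < δ3 := by
    rw [hδ3]
    split_ifs with h
    · norm_num
    · have hwz : 0 < netWorth (fun r i => e r i + u r i) P (σ+1) z := by
        rcases hgood with h1 | h1
        · exact absurd h1 h
        · exact h1
      positivity
  set δ : ℝ := min (netWorth (fun r i => e r i + u r i) P (t+1) i) (min δ2 δ3) with hδdef
  have hδ : 0 < δ := lt_min hw1 (lt_min hδ2pos hδ3pos)
  -- key δ bound on support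
  have hδM : ∀ a b, α ^ (σ - t) * δ * M a b ≤ P σ a b := by
    intro a b
    by_cases hab : M a b = 0
    · rw [hab, mul_zero]
      exact P_nonneg hfeas hσT a b
    · have hMpos : 0 < M a b := lt_of_le_of_ne (hM0' a b) (Ne.symm hab)
      have hmem : (a, b) ∈ Spt := by
        rw [hSpt]
        exact Finset.mem_filter.2
          ⟨Finset.mem_product.2 ⟨Finset.mem_univ _, Finset.mem_univ _⟩, hab⟩
      have hle : δ2 ≤ P σ a b / (α ^ (σ - t) * M a b) :=
        Finset.inf'_le _ hmem
      have hδle : δ ≤ P σ a b / (α ^ (σ - t) * M a b) :=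
        le_trans (le_trans (min_le_right _ _) (min_le_left _ _)) hle
      rw [le_div_iff₀ (by positivity)] at hδle
      calc α ^ (σ - t) * δ * M a b = δ * (α ^ (σ - t) * M a b) := by ring
        _ ≤ P σ a b := hδle
  refine improve_contra hα hfeas hη0 hη1 hopt t σ ht htσ (by omega) M hδ hM0' hMtot
    (fun _ => hδM) ?_ ?_
  · -- H2
    intro s hts hsσ hsT a b
    by_cases hab : M a b = 0
    · rw [hab, mul_zero]
      have := P_le_D hfeas hsT a b
      linarith
    · have hsb := slack_bound hα hfeas a b σ hσT s hsσ
      have h1 := hδM a b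
      have hpow2 : (0:ℝ) < α ^ (σ - s) := by positivity
      have hcomb : α ^ (σ - s) * (α ^ (s - t) * δ * M a b) = α ^ (σ - t) * δ * M a b := by
        rw [show σ - t = (σ - s) + (s - t) by omega, pow_add]
        ring
      nlinarith
  · -- H3
    intro v s hts hsT
    rw [hMflow v]
    rcases le_or_gt s σ with hsσ | hsσ
    · have hB : Bcoef (pulseg α δ t σ) s = δ := Bcoef_pulse_mid htσ s hts hsσ
      rw [hB]
      by_cases hvi : v = i
      · subst hvi
        have hmono : netWorth (fun r i => e r i + u r i) P (t+1) v
            ≤ netWorth (fun r i => e r i + u r i) P s v := by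
          apply w_mono he hfeas v (t+1) s (by omega) hsT
          intro r hr1 hr2 j
          exact hmid r (by omega) (by omega) j
        have hδle : δ ≤ netWorth (fun r i => e r i + u r i) P (t+1) v := min_le_left _ _
        by_cases hvz : v = z
        · rw [if_pos hvz, if_pos rfl]
          have := w_nonneg hfeas s hsT v
          nlinarith
        · rw [if_neg hvz, if_pos rfl]
          nlinarith
      · have hw0 := w_nonneg hfeas s hsT v
        by_cases hvz : v = z
        · rw [if_pos hvz, if_neg hvi]
          nlinarith
        · rw [if_neg hvz, if_neg hvi]
          nlinarith
    · have hB : Bcoef (pulseg α δ t σ) s = δ - α ^ (σ - t) * δ :=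
        Bcoef_pulse_post htσ s hsσ
      rw [hB]
      have hw0 := w_nonneg hfeas s hsT v
      have hpow1 : (1:ℝ) ≤ α ^ (σ - t) := one_le_pow₀ hα
      by_cases hvi : v = i
      · subst hvi
        by_cases hvz : v = z
        · rw [if_pos hvz, if_pos rfl]
          nlinarith
        · rw [if_neg hvz, if_pos rfl]
          nlinarith
      · by_cases hvz : v = z
        · -- absorber
          subst hvz
          rw [if_pos rfl, if_neg hvi]
          have hzi : ¬ v = i := hvi
          have hwz : 0 < netWorth (fun r i => e r i + u r i) P (σ+1) v := by
            rcases hgood with h1 | h1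
            · exact absurd h1 hzi
            · exact h1
          have habs := absorber hα hPbar hPdiag he hfeas σ hσT v (hIH v) hwz s hsσ hsT
          have hδ3le : δ ≤ δ3 := le_trans (min_le_right _ _) (min_le_right _ _)
          have : δ3 = netWorth (fun r i => e r i + u r i) P (σ+1) v / α ^ (σ - t) := by
            rw [hδ3, if_neg hzi]
          rw [this] at hδ3le
          rw [le_div_iff₀ hαpow] at hδ3le
          nlinarith
        · rw [if_neg hvz, if_neg hvi]
          nlinarith

end Facts

theorem stmt0_absolute_priority_free (n T : ℕ) (hn : 1 ≤ n) (hT : 1 ≤ T)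
    (α : ℝ) (hα : 1 ≤ α)
    (Pbar : Matrix (Fin n) (Fin n) ℝ)
    (hPbar : ∀ i j, 0 ≤ Pbar i j) (hPdiag : ∀ i, Pbar i i = 0)
    (e : ℕ → Fin n → ℝ) (he : ∀ t, t < T → ∀ i, 0 ≤ e t i)
    (F : ℕ → ℝ) (hF : ∀ t, 0 ≤ F t) (hFmono : ∀ s t, s ≤ t → F s ≤ F t)
    (η γ : ℝ) (hη0 : 0 ≤ η) (hη1 : η < 1) (hγ : 0 < γ)
    (Pstar : ℕ → Matrix (Fin n) (Fin n) ℝ) (ustar : ℕ → Fin n → ℝ)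
    (hopt : OptimalFree T α η γ Pbar e F Pstar ustar) :
    ∀ i : Fin n, ∀ t, t < T →
      ∑ j, Pstar t i j =
        min (∑ j, resLiab α Pbar Pstar t i j)
          (netWorth (fun s i => e s i + ustar s i) Pstar t i + (e t i + ustar t i)
            + ∑ j ∈ univ.erase i, Pstar t j i) := by
  classical
  have hfeas := hopt.1
  suffices H : ∀ k t, t < T → T - t ≤ k → ∀ i, APat T α η γ Pbar e Pstar ustar t i by
    intro i t ht
    exact H (T - t) t ht le_rfl i
  intro k
  induction k with
  | zero => intro t ht hk; omega
  | succ k IH =>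
    intro t ht hk i
    have hple : (∑ j, Pstar t i j) ≤ ∑ j, resLiab α Pbar Pstar t i j :=
      Finset.sum_le_sum (fun j _ => P_le_D hfeas ht i j)
    have hid := wealth_identity hα hPbar hPdiag hfeas ht i
    have hwnn : 0 ≤ netWorth (fun s i => e s i + ustar s i) Pstar (t+1) i :=
      (hfeas t ht).2.2.2.1 i
    have havail : (∑ j, Pstar t i j)
        ≤ netWorth (fun s i => e s i + ustar s i) Pstar t i + (e t i + ustar t i)
          + ∑ j ∈ univ.erase i, Pstar t j i := by
      rw [hid] at hwnn
      linarith
    rcases eq_or_lt_of_le (le_min hple havail) with h | h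
    · exact h
    · exfalso
      have hlt1 : (∑ j, Pstar t i j) < ∑ j, resLiab α Pbar Pstar t i j :=
        lt_of_lt_of_le h (min_le_left _ _)
      have hlt2 : (∑ j, Pstar t i j)
          < netWorth (fun s i => e s i + ustar s i) Pstar t i + (e t i + ustar t i)
            + ∑ j ∈ univ.erase i, Pstar t j i :=
        lt_of_lt_of_le h (min_le_right _ _)
      have hw1 : 0 < netWorth (fun s i => e s i + ustar s i) Pstar (t+1) i := by
        rw [hid]; linarith
      by_cases hB : ∃ s, t < s ∧ s < T ∧ 0 < ∑ j, Pstar s i j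
      · set σ := Nat.find hB with hσdef
        have hQσ : t < σ ∧ σ < T ∧ 0 < ∑ j, Pstar σ i j := Nat.find_spec hB
        have hmid : ∀ r, t < r → r < σ → ∀ j, Pstar r i j = 0 := by
          intro r h1 h2 j
          have hrT : r < T := by
            have := hQσ.2.1
            omega
          have hnot := Nat.find_min hB h2
          push_neg at hnot
          have hsum : (∑ j, Pstar r i j) ≤ 0 := hnot h1 hrT
          have := (Finset.sum_eq_zero_iff_of_nonneg
            (fun j (_ : j ∈ (univ : Finset (Fin n))) => P_nonneg hfeas hrT i j)).1
            (le_antisymm hsum (Finset.sum_nonneg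
              (fun j _ => P_nonneg hfeas hrT i j)))
          exact this j (Finset.mem_univ j)
        have hk1 : ∃ k1, 0 < Pstar σ i k1 := by
          by_contra hc
          push_neg at hc
          have : (∑ j, Pstar σ i j) ≤ 0 :=
            Finset.sum_nonpos (fun j _ => hc j)
          linarith [hQσ.2.2]
        obtain ⟨k1, hk1⟩ := hk1
        have hIH : ∀ v, APat T α η γ Pbar e Pstar ustar σ v := by
          intro v
          refine IH σ hQσ.2.1 ?_ v
          have := hQσ.1
          omega
        exact caseB_contra hα hPbar hPdiag he hfeas hη0 hη1 hopt t σ ht hQσ.1 hQσ.2.1 i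
          hw1 hmid k1 hk1 hIH
      · push_neg at hB
        have hA : ∀ s, t < s → s < T → ∀ j, Pstar s i j = 0 := by
          intro s h1 h2 j
          have hsum := hB s h1 h2
          have := (Finset.sum_eq_zero_iff_of_nonneg
            (fun j (_ : j ∈ (univ : Finset (Fin n))) => P_nonneg hfeas h2 i j)).1
            (le_antisymm hsum (Finset.sum_nonneg
              (fun j _ => P_nonneg hfeas h2 i j)))
          exact this j (Finset.mem_univ j)
        obtain ⟨j0, _, hj0⟩ := Finset.exists_lt_of_sum_lt hlt1
        exact caseA_contra hα hPbar hPdiag he hfeas hη0 hη1 hopt t ht i j0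
          (by linarith) hw1 hA
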